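/- Let B_1, …, B_l be real symmetric n×n matrices with B_iB_j = 0 for all i ≠ j, and let Y ∈ ℝ^{n×p} be such that Tr(B_j²YYᵀ) ≠ 0 for every j = 1, …, l. For U ∈ ℝ^{n×p} define u_j = Tr(B_j U Yᵀ)/Tr(B_j² YYᵀ) and P(U) = U − Σ_{j=1}^l u_j B_j Y. Then: (a) Tr(B_j P(U) Yᵀ) = 0 for every j = 1, …, l, i.e., P(U) lies in the tangent set T = {V ∈ ℝ^{n×p} : Tr(B_j V Yᵀ) = 0 for all j}; and (b) ⟨U − P(U), V⟩ = 0 for every V ∈ T, where ⟨A, B⟩ = Tr(AᵀB). Consequently P(U) is the orthogonal projection of U onto T, and U − P(U) lies in the span of {B_1Y, …, B_lY}. -/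
import Mathlib


open Matrix BigOperators Finset

/-- Lemma 4.3: explicit orthogonal projector onto the tangent space
`T = {V : Tr(B j V Yᵀ) = 0 for all j}` under the pairwise-annihilation assumption
`B i * B j = 0 (i ≠ j)` and nondegeneracy `Tr(B j² YYᵀ) ≠ 0`. The inner product on
`ℝ^{n×p}` is `⟨A, B⟩ = Tr(AᵀB)`. -/
theorem tangent_space_projection
    (n p l : ℕ)
    (B : Fin l → Matrix (Fin n) (Fin n) ℝ) (hB : ∀ j, (B j).IsSymm)
    (hBB : ∀ i j, i ≠ j → B i * B j = 0)
    (Y : Matrix (Fin n) (Fin p) ℝ)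
    (hY : ∀ j, (B j * B j * (Y * Yᵀ)).trace ≠ 0)
    (U : Matrix (Fin n) (Fin p) ℝ)
    (u : Fin l → ℝ)
    (hu : ∀ j, u j = (B j * U * Yᵀ).trace / (B j * B j * (Y * Yᵀ)).trace)
    (P : Matrix (Fin n) (Fin p) ℝ)
    (hP : P = U - ∑ j, u j • (B j * Y)) :
    (∀ j, (B j * P * Yᵀ).trace = 0) ∧
    (∀ V : Matrix (Fin n) (Fin p) ℝ,
      (∀ j, (B j * V * Yᵀ).trace = 0) → ((U - P)ᵀ * V).trace = 0) ∧
    (U - P) ∈ Submodule.span ℝ (Set.range fun j => B j * Y) := by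
  have hUP : U - P = ∑ j, u j • (B j * Y) := by rw [hP, sub_sub_cancel]
  have key : ∀ i j, (B j * (u i • (B i * Y)) * Yᵀ).trace
      = u i * (B j * B i * (Y * Yᵀ)).trace := by
    intro i j
    rw [Matrix.mul_smul, Matrix.smul_mul, trace_smul, smul_eq_mul,
      ← Matrix.mul_assoc, Matrix.mul_assoc (B j * B i)]
  refine ⟨?_, ?_, ?_⟩
  · intro j
    rw [hP, Matrix.mul_sub, Matrix.sub_mul, trace_sub, Matrix.mul_sum,
      Matrix.sum_mul, trace_sum]
    rw [Finset.sum_congr rfl fun i _ => key i j]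
    rw [Finset.sum_eq_single j
      (fun i _ hij => by rw [hBB j i (Ne.symm hij), zero_mul, trace_zero, mul_zero])
      (fun h => absurd (Finset.mem_univ j) h)]
    rw [hu j, div_mul_cancel₀ _ (hY j), sub_self]
  · intro V hV
    rw [hUP, Matrix.transpose_sum, Matrix.sum_mul, trace_sum]
    refine Finset.sum_eq_zero fun j _ => ?_
    rw [Matrix.transpose_smul, Matrix.transpose_mul, (hB j).eq, Matrix.smul_mul,
      trace_smul, Matrix.mul_assoc, Matrix.trace_mul_comm, hV j, smul_zero]
  · rw [hUP]
    exact Submodule.sum_mem _ fun j _ =>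
      Submodule.smul_mem _ _ (Submodule.subset_span ⟨j, rfl⟩)
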